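/- With the notation of the context, for each R ∈ {∅, U, V, U∪V} one has ℳ_ℤ(R) = ℳ_ℝ(R) ∩ ℤ²: every integer point of the real maculate region is the image under π of an integer vector with coordinates ≤ −1 on R and ≥ 0 off R. -/

import Mathlib

open scoped BigOperators

/-- The class map `π : ℝ^{ℓ₁} × ℝ^{ℓ₂} → ℝ²` for the Picard-rank-2 data `(ℓ₁, ℓ₂, c)`. -/
noncomputable def picTwoPiR (ℓ₁ ℓ₂ : ℕ) (c : Fin ℓ₂ → ℤ)
    (x : Fin ℓ₁ ⊕ Fin ℓ₂ → ℝ) : ℝ × ℝ :=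
  ((∑ i, x (Sum.inl i)) + ∑ j, (c j : ℝ) * x (Sum.inr j), ∑ j, x (Sum.inr j))

/-- The integral class map `π : ℤ^{ℓ₁} × ℤ^{ℓ₂} → ℤ²`. -/
def picTwoPiZ (ℓ₁ ℓ₂ : ℕ) (c : Fin ℓ₂ → ℤ)
    (x : Fin ℓ₁ ⊕ Fin ℓ₂ → ℤ) : ℤ × ℤ :=
  ((∑ i, x (Sum.inl i)) + ∑ j, c j * x (Sum.inr j), ∑ j, x (Sum.inr j))

/-- The real maculate region `ℳ_ℝ(R)`. -/
noncomputable def picTwoMacR (ℓ₁ ℓ₂ : ℕ) (c : Fin ℓ₂ → ℤ)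
    (R : Set (Fin ℓ₁ ⊕ Fin ℓ₂)) : Set (ℝ × ℝ) :=
  picTwoPiR ℓ₁ ℓ₂ c '' {x | (∀ ρ ∈ R, x ρ ≤ -1) ∧ ∀ ρ ∉ R, 0 ≤ x ρ}

/-- The integral maculate set `ℳ_ℤ(R)`. -/
def picTwoMacZ (ℓ₁ ℓ₂ : ℕ) (c : Fin ℓ₂ → ℤ)
    (R : Set (Fin ℓ₁ ⊕ Fin ℓ₂)) : Set (ℤ × ℤ) :=
  picTwoPiZ ℓ₁ ℓ₂ c '' {x | (∀ ρ ∈ R, x ρ ≤ -1) ∧ ∀ ρ ∉ R, 0 ≤ x ρ}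


private lemma sum_update_eq {n : ℕ} (f : Fin n → ℤ) (i : Fin n) (w : ℤ) :
    ∑ j, Function.update f i w j = ∑ j, f j - f i + w := by
  rw [Finset.sum_update_of_mem (Finset.mem_univ i), ← Finset.erase_eq,
    Finset.sum_erase_eq_sub (Finset.mem_univ i)]
  ring

private lemma sum_mul_update {n : ℕ} (c : Fin n → ℤ) (base : ℤ) (i : Fin n) (w : ℤ) :
    ∑ j, c j * Function.update (fun _ => base) i w j
      = (∑ j, c j * base) - c i * base + c i * w := by
  have h : ∀ j, c j * Function.update (fun _ => base) i w j
      = Function.update (fun j => c j * base) i (c i * w) j := by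
    intro j
    rcases eq_or_ne j i with rfl | h
    · simp
    · simp [Function.update_of_ne h]
  simp_rw [h]
  rw [sum_update_eq]

private lemma sum_const_fin (n : ℕ) (v : ℤ) : ∑ _j : Fin n, v = n * v := by
  simp [Finset.sum_const, Finset.card_univ, mul_comm]

private lemma fwd_dir (ℓ₁ ℓ₂ : ℕ) (c : Fin ℓ₂ → ℤ) (R : Set (Fin ℓ₁ ⊕ Fin ℓ₂)) (p : ℤ × ℤ)
    (h : p ∈ picTwoMacZ ℓ₁ ℓ₂ c R) : ((p.1 : ℝ), (p.2 : ℝ)) ∈ picTwoMacR ℓ₁ ℓ₂ c R := by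
  obtain ⟨x, ⟨hneg, hpos⟩, rfl⟩ := h
  refine ⟨fun ρ => (x ρ : ℝ), ⟨fun ρ hρ => ?_, fun ρ hρ => ?_⟩, ?_⟩
  · show (x ρ : ℝ) ≤ -1
    exact_mod_cast hneg ρ hρ
  · show (0:ℝ) ≤ (x ρ : ℝ)
    exact_mod_cast hpos ρ hρ
  · simp only [picTwoPiR, picTwoPiZ, Prod.ext_iff]
    constructor <;> push_cast <;> ring

private lemma bwd_empty (ℓ₁ ℓ₂ : ℕ) (h1 : 2 ≤ ℓ₁) (h2 : 2 ≤ ℓ₂)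
    (c : Fin ℓ₂ → ℤ) (hmono : Antitone c) (p : ℤ × ℤ)
    (h : ((p.1 : ℝ), (p.2 : ℝ)) ∈ picTwoMacR ℓ₁ ℓ₂ c (∅ : Set (Fin ℓ₁ ⊕ Fin ℓ₂))) :
    p ∈ picTwoMacZ ℓ₁ ℓ₂ c ∅ := by
  obtain ⟨x, ⟨-, hpos⟩, hx⟩ := h
  have hall : ∀ ρ, 0 ≤ x ρ := fun ρ => hpos ρ (Set.notMem_empty ρ)
  simp only [picTwoPiR, Prod.ext_iff] at hx
  obtain ⟨hx1, hx2⟩ := hx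
  set last : Fin ℓ₂ := ⟨ℓ₂ - 1, by omega⟩ with hlast
  have hjle : ∀ j : Fin ℓ₂, c last ≤ c j :=
    fun j => hmono (by rw [Fin.le_def]; exact Nat.le_pred_of_lt j.isLt)
  have ht : 0 ≤ p.2 := by
    have h0 : (0:ℝ) ≤ (p.2:ℝ) := hx2 ▸ Finset.sum_nonneg fun j _ => hall _
    exact_mod_cast h0
  have hs : c last * p.2 ≤ p.1 := by
    have key : ∑ j, ((c j:ℝ) - (c last:ℝ)) * x (Sum.inr j)
        = (∑ j, (c j:ℝ) * x (Sum.inr j)) - (c last:ℝ) * ∑ j, x (Sum.inr j) := by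
      rw [Finset.mul_sum, ← Finset.sum_sub_distrib]
      exact Finset.sum_congr rfl fun j _ => by ring
    have ha : (0:ℝ) ≤ ∑ i, x (Sum.inl i) := Finset.sum_nonneg fun i _ => hall _
    have hb : (0:ℝ) ≤ ∑ j, ((c j:ℝ) - (c last:ℝ)) * x (Sum.inr j) :=
      Finset.sum_nonneg fun j _ =>
        mul_nonneg (sub_nonneg.2 (by exact_mod_cast hjle j)) (hall _)
    have hr : ((c last : ℤ):ℝ) * (p.2:ℝ) ≤ (p.1:ℝ) := by
      rw [key] at hb
      rw [← hx1, ← hx2]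
      linarith
    exact_mod_cast hr
  refine ⟨Sum.elim (Function.update (fun _ => 0) ⟨0, by omega⟩ (p.1 - c last * p.2))
      (Function.update (fun _ => 0) last p.2),
      ⟨fun ρ hρ => absurd hρ (Set.notMem_empty ρ), fun ρ _ => ?_⟩, ?_⟩
  · rcases ρ with i | j
    · simp only [Sum.elim_inl]
      rcases eq_or_ne i ⟨0, by omega⟩ with rfl | hne
      · simpa using sub_nonneg.2 hs
      · simp [Function.update_of_ne hne]
    · simp only [Sum.elim_inr]
      rcases eq_or_ne j last with rfl | hne
      · simpa using ht
      · simp [Function.update_of_ne hne]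
  · simp only [picTwoPiZ, Sum.elim_inl, Sum.elim_inr, Prod.ext_iff]
    rw [sum_update_eq, sum_update_eq, sum_mul_update]
    constructor
    · simp
    · simp

private lemma bwd_U (ℓ₁ ℓ₂ : ℕ) (h1 : 2 ≤ ℓ₁) (h2 : 2 ≤ ℓ₂)
    (c : Fin ℓ₂ → ℤ) (hc0 : c ⟨0, lt_of_lt_of_le two_pos h2⟩ = 0) (hmono : Antitone c) (p : ℤ × ℤ)
    (h : ((p.1 : ℝ), (p.2 : ℝ)) ∈ picTwoMacR ℓ₁ ℓ₂ c (Set.range Sum.inl)) :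
    p ∈ picTwoMacZ ℓ₁ ℓ₂ c (Set.range Sum.inl) := by
  obtain ⟨x, ⟨hneg, hpos⟩, hx⟩ := h
  have hA : ∀ i, x (Sum.inl i) ≤ -1 := fun i => hneg _ ⟨i, rfl⟩
  have hB : ∀ j, 0 ≤ x (Sum.inr j) := fun j => hpos _ (by simp)
  simp only [picTwoPiR, Prod.ext_iff] at hx
  obtain ⟨hx1, hx2⟩ := hx
  have hcle : ∀ j, c j ≤ 0 := fun j => by
    have : c j ≤ c ⟨0, by omega⟩ := hmono (by rw [Fin.le_def]; exact Nat.zero_le _)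
    omega
  have ht : 0 ≤ p.2 := by
    have h0 : (0:ℝ) ≤ (p.2:ℝ) := hx2 ▸ Finset.sum_nonneg fun j _ => hB _
    exact_mod_cast h0
  have hs : p.1 ≤ -(ℓ₁:ℤ) := by
    have ha : ∑ i, x (Sum.inl i) ≤ ∑ _i : Fin ℓ₁, (-1:ℝ) :=
      Finset.sum_le_sum fun i _ => hA i
    have ha' : ∑ _i : Fin ℓ₁, (-1:ℝ) = -(ℓ₁:ℝ) := by simp
    have hb : ∑ j, (c j:ℝ) * x (Sum.inr j) ≤ 0 := Finset.sum_nonpos fun j _ =>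
      mul_nonpos_of_nonpos_of_nonneg (by exact_mod_cast hcle j) (hB j)
    have hr : (p.1:ℝ) ≤ -(ℓ₁:ℝ) := by rw [← hx1]; linarith
    exact_mod_cast hr
  refine ⟨Sum.elim (Function.update (fun _ => -1) ⟨0, by omega⟩ (p.1 + ℓ₁ - 1))
      (Function.update (fun _ => 0) ⟨0, by omega⟩ p.2), ⟨?_, ?_⟩, ?_⟩
  · rintro ρ ⟨i, rfl⟩
    simp only [Sum.elim_inl]
    rcases eq_or_ne i ⟨0, by omega⟩ with rfl | hne
    · simp only [Function.update_self]
      omega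
    · simp [Function.update_of_ne hne]
  · intro ρ hρ
    rcases ρ with i | j
    · exact absurd ⟨i, rfl⟩ hρ
    · simp only [Sum.elim_inr]
      rcases eq_or_ne j ⟨0, by omega⟩ with rfl | hne
      · simpa using ht
      · simp [Function.update_of_ne hne]
  · simp only [picTwoPiZ, Sum.elim_inl, Sum.elim_inr, Prod.ext_iff]
    rw [sum_update_eq, sum_update_eq, sum_mul_update]
    constructor
    · simp [sum_const_fin, hc0]
    · simp

private lemma bwd_V (ℓ₁ ℓ₂ : ℕ) (h1 : 2 ≤ ℓ₁) (h2 : 2 ≤ ℓ₂)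
    (c : Fin ℓ₂ → ℤ) (hc0 : c ⟨0, lt_of_lt_of_le two_pos h2⟩ = 0) (hmono : Antitone c) (p : ℤ × ℤ)
    (h : ((p.1 : ℝ), (p.2 : ℝ)) ∈ picTwoMacR ℓ₁ ℓ₂ c (Set.range Sum.inr)) :
    p ∈ picTwoMacZ ℓ₁ ℓ₂ c (Set.range Sum.inr) := by
  obtain ⟨x, ⟨hneg, hpos⟩, hx⟩ := h
  have hA : ∀ i, 0 ≤ x (Sum.inl i) := fun i => hpos _ (by simp)
  have hB : ∀ j, x (Sum.inr j) ≤ -1 := fun j => hneg _ ⟨j, rfl⟩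
  simp only [picTwoPiR, Prod.ext_iff] at hx
  obtain ⟨hx1, hx2⟩ := hx
  have hcle : ∀ j, c j ≤ 0 := fun j => by
    have : c j ≤ c ⟨0, by omega⟩ := hmono (by rw [Fin.le_def]; exact Nat.zero_le _)
    omega
  have ht : p.2 ≤ -(ℓ₂:ℤ) := by
    have hb : ∑ j, x (Sum.inr j) ≤ ∑ _j : Fin ℓ₂, (-1:ℝ) :=
      Finset.sum_le_sum fun j _ => hB j
    have hb' : ∑ _j : Fin ℓ₂, (-1:ℝ) = -(ℓ₂:ℝ) := by simp
    have hr : (p.2:ℝ) ≤ -(ℓ₂:ℝ) := by rw [← hx2]; linarith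
    exact_mod_cast hr
  have hs : -(∑ j, c j) ≤ p.1 := by
    have key : ∑ j, (c j:ℝ) * (x (Sum.inr j) + 1)
        = (∑ j, (c j:ℝ) * x (Sum.inr j)) + ∑ j, (c j:ℝ) := by
      rw [← Finset.sum_add_distrib]
      exact Finset.sum_congr rfl fun j _ => by ring
    have hb : (0:ℝ) ≤ ∑ j, (c j:ℝ) * (x (Sum.inr j) + 1) :=
      Finset.sum_nonneg fun j _ => by
        have h1 : (c j : ℝ) ≤ 0 := by exact_mod_cast hcle j
        have h2 : x (Sum.inr j) + 1 ≤ 0 := by linarith [hB j]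
        nlinarith
    have ha : (0:ℝ) ≤ ∑ i, x (Sum.inl i) := Finset.sum_nonneg fun i _ => hA _
    have hr : (-(∑ j, c j) : ℝ) ≤ (p.1:ℝ) := by
      rw [key] at hb
      rw [← hx1]
      push_cast
      linarith
    exact_mod_cast hr
  refine ⟨Sum.elim (Function.update (fun _ => 0) ⟨0, by omega⟩ (p.1 + ∑ j, c j))
      (Function.update (fun _ => -1) ⟨0, by omega⟩ (p.2 + ℓ₂ - 1)), ⟨?_, ?_⟩, ?_⟩
  · rintro ρ ⟨j, rfl⟩
    simp only [Sum.elim_inr]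
    rcases eq_or_ne j ⟨0, by omega⟩ with rfl | hne
    · simp only [Function.update_self]
      omega
    · simp [Function.update_of_ne hne]
  · intro ρ hρ
    rcases ρ with i | j
    · simp only [Sum.elim_inl]
      rcases eq_or_ne i ⟨0, by omega⟩ with rfl | hne
      · simp only [Function.update_self]
        omega
      · simp [Function.update_of_ne hne]
    · exact absurd ⟨j, rfl⟩ hρ
  · simp only [picTwoPiZ, Sum.elim_inl, Sum.elim_inr, Prod.ext_iff]
    rw [sum_update_eq, sum_update_eq, sum_mul_update]
    constructor
    · simp [hc0]
    · simp [sum_const_fin]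

private lemma bwd_UV (ℓ₁ ℓ₂ : ℕ) (h1 : 2 ≤ ℓ₁) (h2 : 2 ≤ ℓ₂)
    (c : Fin ℓ₂ → ℤ) (hc0 : c ⟨0, lt_of_lt_of_le two_pos h2⟩ = 0) (hmono : Antitone c) (p : ℤ × ℤ)
    (h : ((p.1 : ℝ), (p.2 : ℝ)) ∈
      picTwoMacR ℓ₁ ℓ₂ c (Set.range Sum.inl ∪ Set.range Sum.inr)) :
    p ∈ picTwoMacZ ℓ₁ ℓ₂ c (Set.range Sum.inl ∪ Set.range Sum.inr) := by
  obtain ⟨x, ⟨hneg, hpos⟩, hx⟩ := h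
  have hA : ∀ i, x (Sum.inl i) ≤ -1 := fun i => hneg _ (Or.inl ⟨i, rfl⟩)
  have hB : ∀ j, x (Sum.inr j) ≤ -1 := fun j => hneg _ (Or.inr ⟨j, rfl⟩)
  simp only [picTwoPiR, Prod.ext_iff] at hx
  obtain ⟨hx1, hx2⟩ := hx
  set last : Fin ℓ₂ := ⟨ℓ₂ - 1, by omega⟩ with hlast
  have hjle : ∀ j : Fin ℓ₂, c last ≤ c j :=
    fun j => hmono (by rw [Fin.le_def]; exact Nat.le_pred_of_lt j.isLt)
  have ht : p.2 ≤ -(ℓ₂:ℤ) := by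
    have hb : ∑ j, x (Sum.inr j) ≤ ∑ _j : Fin ℓ₂, (-1:ℝ) :=
      Finset.sum_le_sum fun j _ => hB j
    have hb' : ∑ _j : Fin ℓ₂, (-1:ℝ) = -(ℓ₂:ℝ) := by simp
    have hr : (p.2:ℝ) ≤ -(ℓ₂:ℝ) := by rw [← hx2]; linarith
    exact_mod_cast hr
  have key : p.1 + (ℓ₁:ℤ) + (∑ j, c j) ≤ c last * (p.2 + ℓ₂) := by
    have expand : ∑ j, ((c j:ℝ) - (c last:ℝ)) * (x (Sum.inr j) + 1)
        = (∑ j, (c j:ℝ) * x (Sum.inr j)) + (∑ j, (c j:ℝ))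
          - (c last:ℝ) * (∑ j, x (Sum.inr j)) - (ℓ₂:ℝ) * (c last:ℝ) := by
      have e : ∀ j : Fin ℓ₂, ((c j:ℝ) - (c last:ℝ)) * (x (Sum.inr j) + 1)
          = ((c j:ℝ) * x (Sum.inr j) + (c j:ℝ))
            - ((c last:ℝ) * x (Sum.inr j) + (c last:ℝ)) := fun j => by ring
      simp_rw [e]
      rw [Finset.sum_sub_distrib, Finset.sum_add_distrib, Finset.sum_add_distrib,
        ← Finset.mul_sum]
      simp [Finset.sum_const, Finset.card_univ]
      ring
    have h0 : ∑ j, ((c j:ℝ) - (c last:ℝ)) * (x (Sum.inr j) + 1) ≤ 0 :=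
      Finset.sum_nonpos fun j _ =>
        mul_nonpos_of_nonneg_of_nonpos
          (sub_nonneg.2 (by exact_mod_cast hjle j))
          (by linarith [hB j])
    have ha : ∑ i, x (Sum.inl i) ≤ ∑ _i : Fin ℓ₁, (-1:ℝ) :=
      Finset.sum_le_sum fun i _ => hA i
    have ha' : ∑ _i : Fin ℓ₁, (-1:ℝ) = -(ℓ₁:ℝ) := by simp
    have hr : (p.1:ℝ) + (ℓ₁:ℝ) + (∑ j, (c j:ℝ))
        ≤ (c last:ℝ) * ((p.2:ℝ) + (ℓ₂:ℝ)) := by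
      rw [expand] at h0
      rw [← hx1, ← hx2] at *
      nlinarith [h0, ha, ha']
    have hr' : ((p.1 + (ℓ₁:ℤ) + ∑ j, c j : ℤ) : ℝ) ≤ ((c last * (p.2 + ℓ₂) : ℤ) : ℝ) := by
      push_cast
      linarith [hr]
    exact_mod_cast hr'
  refine ⟨Sum.elim
      (Function.update (fun _ => -1) ⟨0, by omega⟩
        (p.1 + ℓ₁ - 1 - c last * (p.2 + ℓ₂) + ∑ j, c j))
      (Function.update (fun _ => -1) last (p.2 + ℓ₂ - 1)), ⟨?_, ?_⟩, ?_⟩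
  · rintro ρ (⟨i, rfl⟩ | ⟨j, rfl⟩)
    · simp only [Sum.elim_inl]
      rcases eq_or_ne i ⟨0, by omega⟩ with rfl | hne
      · simp only [Function.update_self]
        omega
      · simp [Function.update_of_ne hne]
    · simp only [Sum.elim_inr]
      rcases eq_or_ne j last with rfl | hne
      · simp only [Function.update_self]
        omega
      · simp [Function.update_of_ne hne]
  · intro ρ hρ
    exfalso
    rcases ρ with i | j
    · exact hρ (Or.inl ⟨i, rfl⟩)
    · exact hρ (Or.inr ⟨j, rfl⟩)
  · simp only [picTwoPiZ, Sum.elim_inl, Sum.elim_inr, Prod.ext_iff]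
    rw [sum_update_eq, sum_update_eq, sum_mul_update]
    constructor
    · simp [sum_const_fin]
      ring
    · simp [sum_const_fin]

/-- For each of the four tempting subsets `R ∈ {∅, U, V, U ∪ V}`, one has
`ℳ_ℤ(R) = ℳ_ℝ(R) ∩ ℤ²`: an integer point lies in the integral maculate set
iff its image in `ℝ²` lies in the real maculate region. -/
theorem statement9 (ℓ₁ ℓ₂ : ℕ) (h1 : 2 ≤ ℓ₁) (h2 : 2 ≤ ℓ₂)
    (c : Fin ℓ₂ → ℤ) (hc0 : c ⟨0, by omega⟩ = 0) (hmono : Antitone c) :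
    ∀ R ∈ ({∅, Set.range Sum.inl, Set.range Sum.inr,
            Set.range Sum.inl ∪ Set.range Sum.inr} :
              Set (Set (Fin ℓ₁ ⊕ Fin ℓ₂))),
      ∀ p : ℤ × ℤ,
        p ∈ picTwoMacZ ℓ₁ ℓ₂ c R ↔
          ((p.1 : ℝ), (p.2 : ℝ)) ∈ picTwoMacR ℓ₁ ℓ₂ c R := by
  intro R hR p
  simp only [Set.mem_insert_iff, Set.mem_singleton_iff] at hR
  rcases hR with rfl | rfl | rfl | rfl
  · exact ⟨fwd_dir _ _ _ _ _, bwd_empty ℓ₁ ℓ₂ h1 h2 c hmono p⟩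
  · exact ⟨fwd_dir _ _ _ _ _, bwd_U ℓ₁ ℓ₂ h1 h2 c hc0 hmono p⟩
  · exact ⟨fwd_dir _ _ _ _ _, bwd_V ℓ₁ ℓ₂ h1 h2 c hc0 hmono p⟩
  · exact ⟨fwd_dir _ _ _ _ _, bwd_UV ℓ₁ ℓ₂ h1 h2 c hc0 hmono p⟩
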